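/- Let f(x) = ∑_{k=t}^{L} c(k) x^k with c(k) ≥ 0, t ≥ 2, and suppose f(p) < p for some p > 0. Then for all m ≥ 0, the iterates satisfy f^[m](p) ≤ p · (f(p)/p)^(∑_{r=0}^{m-1} t^r) ≤ p · (f(p)/p)^(t^(m-1)) for m ≥ 1, so the logical error rate after m concatenation levels is doubly-exponentially small in m. -/

import Mathlib

/-- Doubly-exponential suppression of the iterates below the pseudo-threshold. -/
theorem stmt_9 (t L : ℕ) (ht : 2 ≤ t) (c : ℕ → ℝ) (hc : ∀ k, 0 ≤ c k)
    (f : ℝ → ℝ) (hf : ∀ x, f x = ∑ k ∈ Finset.Icc t L, c k * x ^ k)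
    (p : ℝ) (hp : 0 < p) (h : f p < p) :
    ∀ m : ℕ, 1 ≤ m →
      f^[m] p ≤ p * (f p / p) ^ (∑ r ∈ Finset.range m, t ^ r) ∧
      p * (f p / p) ^ (∑ r ∈ Finset.range m, t ^ r) ≤ p * (f p / p) ^ (t ^ (m - 1)) := by
  have fnn : ∀ x, 0 ≤ x → 0 ≤ f x := by
    intro x hx; rw [hf]; exact Finset.sum_nonneg fun k _ =>
      mul_nonneg (hc k) (pow_nonneg hx k)
  have hfp0 : 0 ≤ f p := fnn p hp.le
  set ε := f p / p with hε
  have hε0 : 0 ≤ ε := div_nonneg hfp0 hp.le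
  have hε1 : ε < 1 := (div_lt_one hp).mpr h
  have hfpe : f p = p * ε := by rw [hε]; field_simp
  have key : ∀ x, 0 ≤ x → x ≤ p → f x ≤ f p * (x / p) ^ t := by
    intro x hx hxp
    rw [hf, hf, Finset.sum_mul]
    apply Finset.sum_le_sum
    intro k hk
    have hk' := (Finset.mem_Icc.mp hk).1
    have hxp' : x / p ≤ 1 := (div_le_one hp).mpr hxp
    have hxp0 : 0 ≤ x / p := div_nonneg hx hp.le
    have hx' : x ^ k = p ^ k * (x / p) ^ k := by
      rw [div_pow]; field_simp
    rw [hx']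
    have h2 : (x / p) ^ k ≤ (x / p) ^ t := pow_le_pow_of_le_one hxp0 hxp' hk'
    calc c k * (p ^ k * (x / p) ^ k) ≤ c k * (p ^ k * (x / p) ^ t) := by
          exact mul_le_mul_of_nonneg_left
            (mul_le_mul_of_nonneg_left h2 (pow_nonneg hp.le k)) (hc k)
      _ = c k * p ^ k * (x / p) ^ t := by ring
  have main : ∀ m, f^[m] p ≤ p * ε ^ (∑ r ∈ Finset.range m, t ^ r) := by
    intro m
    induction m with
    | zero => simp
    | succ n ih =>
      have hiter_nn : 0 ≤ f^[n] p := by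
        clear ih
        induction n with
        | zero => simpa using hp.le
        | succ k ihk => rw [Function.iterate_succ_apply']; exact fnn _ ihk
      have hle_p : f^[n] p ≤ p := by
        refine ih.trans ?_
        nlinarith [pow_le_one₀ hε0 hε1.le (n := ∑ r ∈ Finset.range n, t ^ r)]
      rw [Function.iterate_succ_apply']
      calc f (f^[n] p) ≤ f p * (f^[n] p / p) ^ t := key _ hiter_nn hle_p
        _ ≤ f p * (ε ^ (∑ r ∈ Finset.range n, t ^ r)) ^ t := by
            apply mul_le_mul_of_nonneg_left _ hfp0
            apply pow_le_pow_left₀ (div_nonneg hiter_nn hp.le)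
            rw [div_le_iff₀ hp]
            nlinarith [ih]
        _ = p * ε ^ (∑ r ∈ Finset.range (n + 1), t ^ r) := by
            rw [geom_sum_succ, pow_add, pow_mul, pow_one, hfpe]; ring
  intro m hm
  refine ⟨main m, ?_⟩
  apply mul_le_mul_of_nonneg_left _ hp.le
  apply pow_le_pow_of_le_one hε0 hε1.le
  have hmem : m - 1 ∈ Finset.range m := Finset.mem_range.mpr (by omega)
  exact Finset.single_le_sum (fun i _ => Nat.zero_le _) hmem
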